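/- (1) For every polynomial f ∈ ℂ[z] and every w ∈ ℂ, setting P(z) = Σ_{k≥0} f^{(k)}(z) (a finite sum, over all derivatives of f), one has P(w) = ∫₀^∞ f(w + t)·e^{−t} dt, where the integral is over the real half-line [0, ∞). (2) Consequently, if α₁, …, α_s ∈ ℂ are distinct, n = (n₁, …, n_s) ∈ ℕ^s, N = n₁+⋯+n_s, f_n(z) = ∏_{k=1}^s (z − α_k)^{n_k}, P_n(z) = Σ_{k=0}^{N} f_n^{(k)}(z), and R = max_{1≤k,ℓ≤s} |α_k − α_ℓ|, then |P_n(α_i)| ≤ e^R · N! for every i ∈ {1, …, s}. -/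

import Mathlib

open Polynomial MeasureTheory Set Filter Topology

/-- `f_m(z) = ∏ₖ (z − αₖ)^{mₖ}`. -/
noncomputable def fpoly {s : ℕ} (α : Fin s → ℂ) (m : Fin s → ℕ) : ℂ[X] :=
  ∏ k, (X - C (α k)) ^ m k

/-- `P_m(z) = Σ_{k=0}^{M} f_m^{(k)}(z)`, the sum of `f_m` and all its derivatives. -/
noncomputable def Ppoly {s : ℕ} (α : Fin s → ℂ) (m : Fin s → ℕ) : ℂ[X] :=
  ∑ k ∈ Finset.range (∑ i, m i + 1), derivative^[k] (fpoly α m)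


-- Gamma-type integral facts
lemma gamma_pow_integrableOn (j : ℕ) :
    IntegrableOn (fun t : ℝ => t ^ j * Real.exp (-t)) (Set.Ioi 0) := by
  have h := Real.GammaIntegral_convergent (s := (j : ℝ) + 1) (by positivity)
  refine (h.congr_fun (fun x hx => ?_) measurableSet_Ioi)
  simp only [add_sub_cancel_right]
  rw [Real.rpow_natCast, mul_comm]

lemma gamma_pow_integral (j : ℕ) :
    ∫ t in Set.Ioi (0:ℝ), t ^ j * Real.exp (-t) = (j.factorial : ℝ) := by
  rw [← Real.Gamma_nat_eq_factorial, Real.Gamma_eq_integral (by positivity)]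
  refine setIntegral_congr_fun measurableSet_Ioi fun x hx => ?_
  simp only [add_sub_cancel_right]
  rw [Real.rpow_natCast, mul_comm]

-- Pointwise bound on polynomial evaluated at a real point, times exp decay
lemma poly_exp_norm_bound (h : ℂ[X]) (t : ℝ) (ht : 0 ≤ t) :
    ‖h.eval (t : ℂ) * Complex.exp (-(t : ℂ))‖ ≤
      ∑ j ∈ Finset.range (h.natDegree + 1), ‖h.coeff j‖ * (t ^ j * Real.exp (-t)) := by
  rw [norm_mul, Complex.norm_exp]
  simp only [Complex.neg_re, Complex.ofReal_re]
  rw [h.eval_eq_sum_range]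
  calc ‖∑ j ∈ Finset.range (h.natDegree + 1), h.coeff j * (t:ℂ) ^ j‖ * Real.exp (-t)
      ≤ (∑ j ∈ Finset.range (h.natDegree + 1), ‖h.coeff j * (t:ℂ) ^ j‖) * Real.exp (-t) := by
        gcongr; exact norm_sum_le _ _
    _ = ∑ j ∈ Finset.range (h.natDegree + 1), ‖h.coeff j‖ * (t ^ j * Real.exp (-t)) := by
        rw [Finset.sum_mul]
        refine Finset.sum_congr rfl fun j _ => ?_
        rw [norm_mul, norm_pow, Complex.norm_real, Real.norm_of_nonneg ht]
        ring

lemma integrableOn_poly_exp (h : ℂ[X]) :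
    IntegrableOn (fun t : ℝ => h.eval (t : ℂ) * Complex.exp (-(t : ℂ))) (Set.Ioi 0) := by
  refine Integrable.mono' (g := fun t : ℝ =>
      ∑ j ∈ Finset.range (h.natDegree + 1), ‖h.coeff j‖ * (t ^ j * Real.exp (-t)))
    (integrable_finset_sum _ fun j _ => ((gamma_pow_integrableOn j).const_mul _)) ?_ ?_
  · exact (((h.continuous_aeval).comp Complex.continuous_ofReal).mul
      (Complex.continuous_exp.comp (Complex.continuous_ofReal.neg))).aestronglyMeasurable
  · filter_upwards [ae_restrict_mem measurableSet_Ioi] with t ht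
    exact poly_exp_norm_bound h t (le_of_lt ht)

lemma tendsto_poly_exp (h : ℂ[X]) :
    Tendsto (fun t : ℝ => h.eval (t : ℂ) * Complex.exp (-(t : ℂ))) atTop (𝓝 0) := by
  refine squeeze_zero_norm' (a := fun t : ℝ =>
      ∑ j ∈ Finset.range (h.natDegree + 1), ‖h.coeff j‖ * (t ^ j * Real.exp (-t))) ?_ ?_
  · filter_upwards [eventually_ge_atTop (0:ℝ)] with t ht
    exact poly_exp_norm_bound h t ht
  · have : Tendsto (fun t : ℝ =>
        ∑ j ∈ Finset.range (h.natDegree + 1), ‖h.coeff j‖ * (t ^ j * Real.exp (-t)))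
        atTop (𝓝 (∑ j ∈ Finset.range (h.natDegree + 1), ‖h.coeff j‖ * 0)) := by
      refine tendsto_finset_sum _ fun j _ => ?_
      exact (Real.tendsto_pow_mul_exp_neg_atTop_nhds_zero j).const_mul _
    simpa using this

lemma integrableOn_shift (f : ℂ[X]) (w : ℂ) :
    IntegrableOn (fun t : ℝ => f.eval (w + (t : ℂ)) * Complex.exp (-(t : ℂ))) (Set.Ioi 0) := by
  have := integrableOn_poly_exp (f.comp (C w + X))
  simpa [eval_comp] using this

lemma tendsto_shift (f : ℂ[X]) (w : ℂ) :
    Tendsto (fun t : ℝ => f.eval (w + (t : ℂ)) * Complex.exp (-(t : ℂ))) atTop (𝓝 0) := by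
  have := tendsto_poly_exp (f.comp (C w + X))
  simpa [eval_comp] using this

lemma hasDerivAt_aux (P : ℂ[X]) (w : ℂ) (t : ℝ) :
    HasDerivAt (fun t : ℝ => -(P.eval (w + (t : ℂ)) * Complex.exp (-(t : ℂ))))
      ((P - derivative P).eval (w + (t : ℂ)) * Complex.exp (-(t : ℂ))) t := by
  have h1 : HasDerivAt (fun z : ℂ => P.eval (w + z)) ((derivative P).eval (w + t)) (t : ℂ) := by
    simpa [Function.comp_def] using (P.hasDerivAt (w + t)).comp (t : ℂ) ((hasDerivAt_id (t : ℂ)).const_add w)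
  have h2 : HasDerivAt (fun z : ℂ => Complex.exp (-z)) (-Complex.exp (-(t:ℂ))) (t : ℂ) := by
    simpa [Function.comp_def] using (Complex.hasDerivAt_exp (-(t:ℂ))).comp (t : ℂ) ((hasDerivAt_id (t : ℂ)).neg)
  have := ((h1.comp_ofReal).mul (h2.comp_ofReal)).neg
  convert this using 1
  · rfl
  · rfl
  simp only [eval_sub]
  ring

lemma key1 (f : ℂ[X]) (w : ℂ) :
    ∑ k ∈ Finset.range (f.natDegree + 1), (derivative^[k] f).eval w =
      ∫ t : ℝ in Set.Ioi (0 : ℝ), f.eval (w + (t : ℂ)) * Complex.exp (-(t : ℂ)) := by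
  set P : ℂ[X] := ∑ k ∈ Finset.range (f.natDegree + 1), derivative^[k] f with hP
  have hder : P - derivative P = f := by
    have h1 : derivative P = ∑ k ∈ Finset.range (f.natDegree + 1), derivative^[k + 1] f := by
      rw [hP, derivative_sum]
      exact Finset.sum_congr rfl fun k _ => (Function.iterate_succ_apply' derivative k f).symm
    have h2 : ∑ k ∈ Finset.range (f.natDegree + 1 + 1), derivative^[k] f =
        (∑ k ∈ Finset.range (f.natDegree + 1), derivative^[k + 1] f) + derivative^[0] f :=
      Finset.sum_range_succ' _ _
    have h3 : ∑ k ∈ Finset.range (f.natDegree + 1 + 1), derivative^[k] f = P := by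
      rw [Finset.sum_range_succ, ← hP, iterate_derivative_eq_zero (by omega), add_zero]
    rw [h1]
    have := h3 ▸ h2
    simp only [Function.iterate_zero_apply] at this
    rw [eq_sub_iff_add_eq.mpr this.symm]
    abel
  have hint : ∫ t : ℝ in Set.Ioi (0:ℝ),
      (P - derivative P).eval (w + (t:ℂ)) * Complex.exp (-(t:ℂ)) =
      0 - -(P.eval (w + ((0:ℝ):ℂ)) * Complex.exp (-((0:ℝ):ℂ))) := by
    refine integral_Ioi_of_hasDerivAt_of_tendsto' (fun x _ => hasDerivAt_aux P w x) ?_ ?_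
    · rw [hder]; exact integrableOn_shift f w
    · simpa using (tendsto_shift P w).neg
  rw [hder] at hint
  rw [hint]
  simp [hP, eval_finset_sum]

example : True := trivial

lemma sum_choose_eq (N : ℕ) (R : ℝ) :
    ∑ j ∈ Finset.range (N+1), ((N.choose j : ℝ) * R^(N-j)) * (j.factorial : ℝ)
      = (N.factorial : ℝ) * ∑ m ∈ Finset.range (N+1), R^m / (m.factorial : ℝ) := by
  rw [← Finset.sum_range_reflect (fun j => ((N.choose j : ℝ) * R^(N-j)) * (j.factorial : ℝ)) (N+1)]
  rw [Finset.mul_sum]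
  refine Finset.sum_congr rfl fun j hj => ?_
  have hjN : j ≤ N := by simpa [Nat.lt_succ_iff] using hj
  simp only [Nat.add_sub_cancel]
  rw [Nat.choose_symm hjN]
  have hred : N - (N - j) = j := by omega
  rw [hred]
  have hc : ((N.choose j : ℝ)) * (j.factorial : ℝ) * ((N-j).factorial : ℝ) = (N.factorial : ℝ) := by
    exact_mod_cast congrArg (Nat.cast : ℕ → ℝ) (Nat.choose_mul_factorial_mul_factorial hjN)
  have hj0 : (j.factorial : ℝ) ≠ 0 := by positivity
  field_simp
  linear_combination R ^ j * hc

/-- (1) For every `f ∈ ℂ[z]` and `w ∈ ℂ`, with `P` the sum of `f` and all its derivatives,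
`P(w) = ∫₀^∞ f(w+t) e^{−t} dt`.
(2) Consequently, for distinct `α₁,…,α_s`, `n ∈ ℕ^s` with sum `N`, and
`R = max_{k,ℓ} |αₖ−α_ℓ|`, one has `|P_n(αᵢ)| ≤ e^R N!` for every `i`. -/
theorem stmt19 :
    (∀ (f : ℂ[X]) (w : ℂ),
      ∑ k ∈ Finset.range (f.natDegree + 1), (derivative^[k] f).eval w =
        ∫ t : ℝ in Set.Ioi (0 : ℝ), f.eval (w + (t : ℂ)) * Complex.exp (-(t : ℂ))) ∧
    (∀ (s : ℕ) (α : Fin s → ℂ), Function.Injective α →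
      ∀ (n : Fin s → ℕ) (N : ℕ), N = ∑ i, n i →
      ∀ R : ℝ, R = sSup {r : ℝ | ∃ k ℓ : Fin s, r = ‖α k - α ℓ‖} →
      ∀ i : Fin s,
        ‖(Ppoly α n).eval (α i)‖ ≤ Real.exp R * N.factorial) := by
  constructor
  · exact key1
  · intro s α hα n N hN R hR i
    have hSeq : {r : ℝ | ∃ k ℓ : Fin s, r = ‖α k - α ℓ‖}
        = Set.range (fun p : Fin s × Fin s => ‖α p.1 - α p.2‖) := by
      ext r
      constructor
      · rintro ⟨k, ℓ, rfl⟩; exact ⟨(k, ℓ), rfl⟩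
      · rintro ⟨⟨k, ℓ⟩, rfl⟩; exact ⟨k, ℓ, rfl⟩
    have hbdd : BddAbove {r : ℝ | ∃ k ℓ : Fin s, r = ‖α k - α ℓ‖} := by
      rw [hSeq]; exact (Set.finite_range _).bddAbove
    have hmem : ∀ k ℓ : Fin s, ‖α k - α ℓ‖ ≤ R := fun k ℓ => by
      rw [hR]; exact le_csSup hbdd ⟨k, ℓ, rfl⟩
    have hR0 : 0 ≤ R := by simpa using hmem i i
    have hdeg : (fpoly α n).natDegree = ∑ i, n i := by
      rw [fpoly, natDegree_prod _ _ (fun k _ => pow_ne_zero _ (X_sub_C_ne_zero (α k)))]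
      simp [natDegree_pow]
    have heval : (Ppoly α n).eval (α i) =
        ∫ t : ℝ in Set.Ioi (0 : ℝ), (fpoly α n).eval (α i + (t : ℂ)) * Complex.exp (-(t : ℂ)) := by
      rw [← key1 (fpoly α n) (α i), Ppoly, eval_finset_sum, hdeg]
    -- pointwise bound
    have hbound : ∀ t : ℝ, 0 ≤ t →
        ‖(fpoly α n).eval (α i + (t : ℂ)) * Complex.exp (-(t : ℂ))‖ ≤
          ∑ j ∈ Finset.range (N+1), ((N.choose j : ℝ) * R^(N-j)) * (t ^ j * Real.exp (-t)) := by
      intro t ht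
      rw [norm_mul, Complex.norm_exp]
      simp only [Complex.neg_re, Complex.ofReal_re]
      have h1 : ‖(fpoly α n).eval (α i + (t : ℂ))‖ ≤ (t + R) ^ N := by
        rw [fpoly, eval_prod, norm_prod]
        have h2 : ∀ k : Fin s, ‖((X - C (α k)) ^ n k).eval (α i + (t : ℂ))‖ ≤ (t + R) ^ n k := by
          intro k
          rw [eval_pow, norm_pow]
          refine pow_le_pow_left₀ (norm_nonneg _) ?_ _
          have : (X - C (α k)).eval (α i + (t : ℂ)) = ((t : ℂ)) + (α i - α k) := by
            simp; ring
          rw [this]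
          calc ‖((t:ℂ)) + (α i - α k)‖ ≤ ‖(t:ℂ)‖ + ‖α i - α k‖ := norm_add_le _ _
            _ ≤ t + R := by
                rw [Complex.norm_real, Real.norm_of_nonneg ht]
                exact add_le_add le_rfl (hmem i k)
        calc ∏ k, ‖((X - C (α k)) ^ n k).eval (α i + (t : ℂ))‖
            ≤ ∏ k, (t + R) ^ n k :=
              Finset.prod_le_prod (fun k _ => norm_nonneg _) (fun k _ => h2 k)
          _ = (t + R) ^ N := by rw [Finset.prod_pow_eq_pow_sum, hN]
      calc ‖(fpoly α n).eval (α i + (t : ℂ))‖ * Real.exp (-t)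
          ≤ (t + R) ^ N * Real.exp (-t) := by
            gcongr
        _ = ∑ j ∈ Finset.range (N+1), ((N.choose j : ℝ) * R^(N-j)) * (t ^ j * Real.exp (-t)) := by
            rw [add_pow, Finset.sum_mul]
            refine Finset.sum_congr rfl fun j _ => ?_
            ring
    have hgint : IntegrableOn (fun t : ℝ =>
        ∑ j ∈ Finset.range (N+1), ((N.choose j : ℝ) * R^(N-j)) * (t ^ j * Real.exp (-t)))
        (Set.Ioi 0) :=
      integrable_finset_sum _ fun j _ => (gamma_pow_integrableOn j).const_mul _
    have hchain : ‖(Ppoly α n).eval (α i)‖ ≤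
        ∑ j ∈ Finset.range (N+1), ((N.choose j : ℝ) * R^(N-j)) * (j.factorial : ℝ) := by
      rw [heval]
      calc ‖∫ t : ℝ in Set.Ioi (0:ℝ), (fpoly α n).eval (α i + (t : ℂ)) * Complex.exp (-(t : ℂ))‖
          ≤ ∫ t : ℝ in Set.Ioi (0:ℝ),
              ‖(fpoly α n).eval (α i + (t : ℂ)) * Complex.exp (-(t : ℂ))‖ :=
            norm_integral_le_integral_norm _
        _ ≤ ∫ t : ℝ in Set.Ioi (0:ℝ),
              ∑ j ∈ Finset.range (N+1), ((N.choose j : ℝ) * R^(N-j)) * (t ^ j * Real.exp (-t)) := by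
            refine setIntegral_mono_on (integrableOn_shift (fpoly α n) (α i)).norm hgint
              measurableSet_Ioi fun t ht => hbound t (le_of_lt ht)
        _ = ∑ j ∈ Finset.range (N+1), ((N.choose j : ℝ) * R^(N-j)) * (j.factorial : ℝ) := by
            rw [integral_finset_sum _ fun j _ => (gamma_pow_integrableOn j).const_mul _]
            refine Finset.sum_congr rfl fun j _ => ?_
            rw [MeasureTheory.integral_const_mul, gamma_pow_integral]
    calc ‖(Ppoly α n).eval (α i)‖
        ≤ ∑ j ∈ Finset.range (N+1), ((N.choose j : ℝ) * R^(N-j)) * (j.factorial : ℝ) := hchain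
      _ = (N.factorial : ℝ) * ∑ m ∈ Finset.range (N+1), R^m / (m.factorial : ℝ) :=
          sum_choose_eq N R
      _ ≤ (N.factorial : ℝ) * Real.exp R := by
          gcongr
          exact Real.sum_le_exp_of_nonneg hR0 _
      _ = Real.exp R * N.factorial := mul_comm _ _
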